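/- Let K be a compact Hausdorff space, φ : K → K a continuous map, and T_φ the composition operator (T_φ f)(k) = f(φ(k)) on C(K). Then the Banach dual operator T_φ* on C(K)* (the space of regular Borel measures on K) preserves disjointness if and only if φ is injective. -/

import Mathlib

open MeasureTheory

noncomputable def diracC {K : Type*} [MeasurableSpace K] (a : K) : ComplexMeasure K :=
  ((MeasureTheory.Measure.dirac a).toSignedMeasure).mapRange
    Complex.ofRealHom.toAddMonoidHom Complex.continuous_ofReal

lemma diracC_apply {K : Type*} [MeasurableSpace K] (a : K) {s : Set K}
    (hs : MeasurableSet s) (ha : a ∈ s) : diracC a s = 1 := by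
  simp [diracC, hs, VectorMeasure.mapRange_apply, Measure.toSignedMeasure_apply_measurable hs,
    Measure.dirac_apply' a hs, Set.indicator_of_mem ha, measureReal_def]

lemma diracC_apply_not_mem {K : Type*} [MeasurableSpace K] (a : K) {s : Set K}
    (ha : a ∉ s) : diracC a s = 0 := by
  by_cases hs : MeasurableSet s
  · simp [diracC, VectorMeasure.mapRange_apply, Measure.toSignedMeasure_apply_measurable hs,
      Measure.dirac_apply' a hs, Set.indicator_of_notMem ha, measureReal_def]
  · exact VectorMeasure.not_measurable _ hs

/-- For a continuous map `φ : K → K` on a compact Hausdorff space, the dual of the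
composition operator `T_φ` — i.e. the pushforward `μ ↦ μ.map φ` on complex regular Borel
measures — preserves disjointness (mutual singularity) if and only if `φ` is injective. -/
theorem stmt2 {K : Type*} [TopologicalSpace K] [CompactSpace K] [T2Space K]
    [MeasurableSpace K] [BorelSpace K]
    (φ : K → K) (hφ : Continuous φ) :
    (∀ μ ν : ComplexMeasure K, μ ⟂ᵥ ν →
      (μ.map φ) ⟂ᵥ (ν.map φ)) ↔ Function.Injective φ := by
  have hφm : Measurable φ := hφ.measurable
  constructor
  · intro h a b hab
    by_contra hne
    have hsing : diracC a ⟂ᵥ diracC b := by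
      refine ⟨{a}ᶜ, (measurableSet_singleton a).compl, ?_, ?_⟩
      · intro t ht
        exact diracC_apply_not_mem a fun hat => (ht hat) rfl
      · intro t ht
        simp only [compl_compl] at ht
        exact diracC_apply_not_mem b fun hbt => hne (ht hbt).symm
    obtain ⟨s, hs, h1, h2⟩ := h _ _ hsing
    by_cases hmem : φ a ∈ s
    · have := h1 {φ a} (Set.singleton_subset_iff.mpr hmem)
      rw [VectorMeasure.map_apply _ hφm (measurableSet_singleton _)] at this
      have h1' : diracC a (φ ⁻¹' {φ a}) = 1 :=
        diracC_apply a (hφm (measurableSet_singleton _)) rfl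
      rw [this] at h1'
      exact one_ne_zero h1'.symm
    · have := h2 {φ a} (Set.singleton_subset_iff.mpr hmem)
      rw [VectorMeasure.map_apply _ hφm (measurableSet_singleton _)] at this
      have h2' : diracC b (φ ⁻¹' {φ a}) = 1 :=
        diracC_apply b (hφm (measurableSet_singleton _)) hab.symm
      rw [this] at h2'
      exact one_ne_zero h2'.symm
  · intro hinj μ ν ⟨s, hs, h1, h2⟩
    have hemb : MeasurableEmbedding φ :=
      (hφ.isClosedEmbedding hinj).measurableEmbedding
    refine ⟨φ '' s, hemb.measurableSet_image.mpr hs, ?_, ?_⟩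
    · intro t ht
      by_cases htm : MeasurableSet t
      · rw [VectorMeasure.map_apply _ hφm htm]
        exact h1 _ fun x hx => by
          obtain ⟨y, hy, hyx⟩ := ht hx
          exact hinj hyx ▸ hy
      · exact VectorMeasure.not_measurable _ htm
    · intro t ht
      by_cases htm : MeasurableSet t
      · rw [VectorMeasure.map_apply _ hφm htm]
        refine h2 _ fun x hx hxs => ht hx ⟨x, hxs, rfl⟩
      · exact VectorMeasure.not_measurable _ htm
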